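/- Let (X, 𝔄, d) be a C*-algebra valued metric space over a unital C*-algebra 𝔄, and let T : X → X satisfy d(Tx, Ty) ⪯ A · (d(x,Tx) + d(y,Ty)) for all x,y ∈ X, where A is a positive element of 𝔄 commuting with every element of 𝔄 and ‖A‖ < 1/2 (so that 1 − A is invertible). Then for every x ∈ X, d(Tx, T²x) ⪯ A(1 − A)⁻¹ · d(x, Tx), where moreover B := A(1 − A)⁻¹ is a positive element commuting with every element of 𝔄 and ‖B‖ < 1. -/

import Mathlib

open Filter Topology Function

/-- A C*-algebra valued metric space: `d : X × X → A` into a unital C*-algebra `A`. -/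
structure CStarMetric (X : Type*) (A : Type*) [NormedRing A] [StarRing A] [PartialOrder A] where
  d : X → X → A
  nonneg : ∀ x y, 0 ≤ d x y
  eq_zero_iff : ∀ x y, d x y = 0 ↔ x = y
  symm : ∀ x y, d x y = d y x
  triangle : ∀ x y z, d x y ≤ d x z + d z y

variable {X A : Type*} [NormedRing A] [StarRing A] [CStarRing A] [PartialOrder A]
  [StarOrderedRing A] [CompleteSpace A] [NormedAlgebra ℂ A]

/-- A sequence converges to `x` when `‖d (s n) x‖ → 0`. -/
def CStarConverges (M : CStarMetric X A) (s : ℕ → X) (x : X) : Prop :=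
  Tendsto (fun n => ‖M.d (s n) x‖) atTop (𝓝 (0 : ℝ))

/-- Cauchy sequence: `‖d (s n) (s m)‖ → 0` as `n, m → ∞`. -/
def CStarCauchy (M : CStarMetric X A) (s : ℕ → X) : Prop :=
  ∀ ε : ℝ, 0 < ε → ∃ N : ℕ, ∀ n m : ℕ, N ≤ n → N ≤ m → ‖M.d (s n) (s m)‖ < ε

/-- Completeness: every Cauchy sequence converges. -/
def CStarComplete (M : CStarMetric X A) : Prop :=
  ∀ s : ℕ → X, CStarCauchy M s → ∃ x, CStarConverges M s x

/-- Orbital continuity of `T` at `u`. -/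
def OrbContAt (M : CStarMetric X A) (T : X → X) (u : X) : Prop :=
  ∀ (x : X) (k : ℕ → ℕ), StrictMono k →
    Tendsto (fun i => ‖M.d (T^[k i] x) u‖) atTop (𝓝 (0 : ℝ)) →
    Tendsto (fun i => ‖M.d (T^[k i + 1] x) (T u)‖) atTop (𝓝 (0 : ℝ))

/-- Orbital continuity of `T` on `X`. -/
def OrbCont (M : CStarMetric X A) (T : X → X) : Prop :=
  ∀ u, OrbContAt M T u

/-- Ćirić-type1 contractive mapping. -/
def CiricType1 (M : CStarMetric X A) (T : X → X) : Prop :=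
  ∃ q δ : X → X → A, (∀ x y, ‖q x y‖ < 1) ∧ (∀ x y, 0 ≤ δ x y) ∧
    ∀ x y : X, ∀ n : ℕ, 1 ≤ n →
      M.d (T^[n] x) (T^[n] y) ≤ star (q x y) ^ n * δ x y * q x y ^ n

/-- Ćirić-type2 contractive mapping: `q` takes values in the central positive elements. -/
def CiricType2 (M : CStarMetric X A) (T : X → X) : Prop :=
  ∃ q δ : X → X → A,
    (∀ x y, 0 ≤ q x y ∧ (∀ b : A, q x y * b = b * q x y) ∧ ‖q x y‖ < 1) ∧
    (∀ x y, 0 ≤ δ x y) ∧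
    ∀ x y : X, ∀ n : ℕ, 1 ≤ n → M.d (T^[n] x) (T^[n] y) ≤ q x y ^ n * δ x y


section Helpers

variable {A : Type*} [NormedRing A] [StarRing A] [CStarRing A] [PartialOrder A]
  [StarOrderedRing A] [CompleteSpace A] [NormedAlgebra ℂ A]

private lemma central_mul_nonneg {p z : A} (hp : 0 ≤ p) (hpc : ∀ b : A, p * b = b * p)
    (hz : 0 ≤ z) : 0 ≤ p * z := by
  rw [StarOrderedRing.nonneg_iff] at hz
  induction hz using AddSubmonoid.closure_induction with
  | mem x hx =>
      obtain ⟨r, rfl⟩ := hx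
      have h1 : p * (star r * r) = star r * p * r := by
        rw [← mul_assoc, hpc (star r)]
      rw [h1]
      exact star_left_conjugate_nonneg hp r
  | zero => simp
  | add x y _ _ hx hy => rw [mul_add]; exact add_nonneg hx hy

private lemma central_mul_le {p x y : A} (hp : 0 ≤ p) (hpc : ∀ b : A, p * b = b * p)
    (h : x ≤ y) : p * x ≤ p * y := by
  rw [← sub_nonneg, ← mul_sub]
  exact central_mul_nonneg hp hpc (sub_nonneg.2 h)

private lemma star_ofReal_algebraMap (r : ℝ) :
    star (algebraMap ℂ A (r : ℂ)) = algebraMap ℂ A (r : ℂ) := by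
  set F := algebraMap ℂ A with hF
  have hq : ∀ q : ℚ, star (F ((q : ℝ) : ℂ)) = F ((q : ℝ) : ℂ) := by
    intro q
    have hcast : ((q : ℝ) : ℂ) = (q : ℂ) := by push_cast; ring
    rw [hcast]
    have hden : ((q.den : ℂ)) ≠ 0 := Nat.cast_ne_zero.mpr q.den_nz
    have hmul : (q : ℂ) * (q.den : ℂ) = (q.num : ℂ) := by
      rw [Rat.cast_def, div_mul_cancel₀ _ hden]
    have h1 : F (q : ℂ) * ((q.den : A)) = ((q.num : A)) := by
      rw [show ((q.den : A)) = F ((q.den : ℂ)) by rw [hF, map_natCast], ← map_mul, hmul,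
        hF, map_intCast]
    have h2 : star (F (q : ℂ)) * ((q.den : A)) = ((q.num : A)) := by
      have h3 := congrArg star h1
      rw [star_mul, star_natCast, star_intCast] at h3
      rw [← (Nat.cast_commute q.den (star (F (q : ℂ)))).eq]
      exact h3
    have hdu : IsUnit ((q.den : A)) := by
      rw [show ((q.den : A)) = F ((q.den : ℂ)) by rw [hF, map_natCast]]
      exact IsUnit.map F (isUnit_iff_ne_zero.mpr hden)
    exact hdu.mul_left_injective (h2.trans h1.symm)
  have hcont1 : Continuous fun r : ℝ => star (F (r : ℂ)) :=
    continuous_star.comp ((continuous_algebraMap ℂ A).comp Complex.continuous_ofReal)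
  have hcont2 : Continuous fun r : ℝ => F (r : ℂ) :=
    (continuous_algebraMap ℂ A).comp Complex.continuous_ofReal
  have heq := Continuous.ext_on (Rat.denseRange_cast (𝕜 := ℝ)) hcont1 hcont2
    (by rintro _ ⟨q, rfl⟩; exact hq q)
  exact congrFun heq r

private lemma star_algebraMap_I : star (algebraMap ℂ A Complex.I) = - algebraMap ℂ A Complex.I := by
  set F := algebraMap ℂ A with hF
  set u := F Complex.I with hu
  have huu : u * u = -1 := by
    rw [hu, ← map_mul, Complex.I_mul_I, map_neg, map_one]
  have hu_central : ∀ b : A, u * b = b * u := by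
    intro b
    rw [hu, hF, Algebra.algebraMap_eq_smul_one, smul_mul_assoc, one_mul, mul_smul_comm, mul_one]
  set s := star u * u with hs
  have hs0 : 0 ≤ s := star_mul_self_nonneg u
  have hs_sa : star s = s := by rw [hs, star_mul, star_star]
  have hss : s * s = 1 := by
    calc s * s = star u * (u * star u) * u := by rw [hs]; noncomm_ring
      _ = star u * (star u * u) * u := by rw [hu_central (star u)]
      _ = (star u * star u) * (u * u) := by noncomm_ring
      _ = star (u * u) * (u * u) := by rw [star_mul]
      _ = 1 := by rw [huu, star_neg, star_one, neg_mul_neg, one_mul]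
  set f := (1 : A) - s with hf
  have hf_sa : star f = f := by rw [hf, star_sub, star_one, hs_sa]
  have hff : f * f = f + f := by
    rw [hf]; linear_combination (norm := noncomm_ring) hss
  have hfs : f * s = -f := by
    rw [hf]; linear_combination (norm := noncomm_ring) -hss
  have hfsf : f * s * f = -(f + f) := by
    rw [hfs, neg_mul, hff]
  have h1 : 0 ≤ -(f + f) := by
    have := star_left_conjugate_nonneg hs0 f
    rwa [hf_sa, hfsf] at this
  have h2 : 0 ≤ f + f := by
    have := star_mul_self_nonneg f
    rwa [hf_sa, hff] at this
  have h3 : f + f = 0 := le_antisymm (by rwa [← neg_nonneg]) h2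
  have h4 : f = 0 := by
    have h5 : (2 : ℂ) • f = 0 := by rw [two_smul]; exact h3
    have := congrArg (fun x => (2⁻¹ : ℂ) • x) h5
    simpa [smul_smul] using this
  have hs1 : s = 1 := by
    have : (1 : A) - s = 0 := h4
    linear_combination (norm := noncomm_ring) -this
  calc star u = star u * (u * (-u)) := by
        rw [mul_neg, huu, neg_neg, mul_one]
    _ = (star u * u) * (-u) := by noncomm_ring
    _ = -u := by rw [← hs, hs1, one_mul]

private lemma star_algebraMap_complex (c : ℂ) :
    star (algebraMap ℂ A c) = algebraMap ℂ A (star c) := by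
  set F := algebraMap ℂ A with hF
  have hc : c = (c.re : ℂ) + (c.im : ℂ) * Complex.I := (Complex.re_add_im c).symm
  have hconj : star c = (c.re : ℂ) - (c.im : ℂ) * Complex.I := by
    rw [Complex.star_def]
    apply Complex.ext <;> simp
  have hIm : F Complex.I * F ((c.im : ℂ)) = F ((c.im : ℂ)) * F Complex.I := by
    rw [← map_mul, ← map_mul, mul_comm]
  calc star (F c) = star (F ((c.re : ℂ)) + F ((c.im : ℂ)) * F Complex.I) := by
        rw [← map_mul, ← map_add, ← hc]
    _ = star (F ((c.re : ℂ))) + star (F Complex.I) * star (F ((c.im : ℂ))) := by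
        rw [star_add, star_mul]
    _ = F ((c.re : ℂ)) + (- F Complex.I) * F ((c.im : ℂ)) := by
        rw [star_ofReal_algebraMap, star_ofReal_algebraMap, star_algebraMap_I]
    _ = F ((c.re : ℂ)) - F ((c.im : ℂ)) * F Complex.I := by
        rw [neg_mul, hIm, ← sub_eq_add_neg]
    _ = F (star c) := by rw [hconj, map_sub, map_mul]

private lemma starModuleComplex : StarModule ℂ A := by
  constructor
  intro c x
  rw [Algebra.smul_def, star_mul, star_algebraMap_complex, Algebra.smul_def, ← Algebra.commutes]

end Helpers

/-- For a Kannan-type mapping with central positive coefficient of norm less than 1/2,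
the element 1 - a is invertible, d(Tx, T²x) is controlled by a(1-a)⁻¹ d(x,Tx), and
B = a(1-a)⁻¹ is a central positive element of norm less than 1. -/
theorem kannan_type_step_estimate
    (M : CStarMetric X A) (T : X → X)
    (a : A) (ha_pos : 0 ≤ a) (ha_comm : ∀ b : A, a * b = b * a) (ha_norm : ‖a‖ < 1 / 2)
    (hT : ∀ x y : X, M.d (T x) (T y) ≤ a * (M.d x (T x) + M.d y (T y))) :
    IsUnit (1 - a) ∧
    (∀ x : X, M.d (T x) (T (T x)) ≤ a * Ring.inverse (1 - a) * M.d x (T x)) ∧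
    0 ≤ a * Ring.inverse (1 - a) ∧
    (∀ b : A, a * Ring.inverse (1 - a) * b = b * (a * Ring.inverse (1 - a))) ∧
    ‖a * Ring.inverse (1 - a)‖ < 1 := by
  letI : StarModule ℂ A := starModuleComplex
  letI : CStarAlgebra A :=
    { toNormedRing := ‹_›, toStarRing := ‹_›, toCStarRing := ‹_›,
      toCompleteSpace := ‹_›, toNormedAlgebra := ‹_›, toStarModule := ‹_› }
  have ha1 : ‖a‖ < 1 := ha_norm.trans (by norm_num)
  have hu : IsUnit (1 - a) := isUnit_one_sub_of_norm_lt_one ha1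
  set v := Ring.inverse (1 - a) with hvdef
  have hvl : v * (1 - a) = 1 := Ring.inverse_mul_cancel _ hu
  have hvr : (1 - a) * v = 1 := Ring.mul_inverse_cancel _ hu
  have ha_sa : IsSelfAdjoint a := IsSelfAdjoint.of_nonneg ha_pos
  have hsub_sa : star (1 - a : A) = 1 - a := by rw [star_sub, star_one, ha_sa.star_eq]
  -- algebraMap ℝ A of a nonneg real is nonneg
  have halg_nonneg : ∀ r : ℝ, 0 ≤ r → 0 ≤ algebraMap ℝ A r := by
    intro r hr
    have h1 : algebraMap ℝ A r = algebraMap ℂ A ((r : ℂ)) := by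
      rw [IsScalarTower.algebraMap_apply ℝ ℂ A, Complex.coe_algebraMap]
    have h2 : algebraMap ℂ A ((r : ℂ)) =
        star (algebraMap ℂ A ((Real.sqrt r : ℂ))) * algebraMap ℂ A ((Real.sqrt r : ℂ)) := by
      rw [star_ofReal_algebraMap, ← map_mul, ← Complex.ofReal_mul, Real.mul_self_sqrt hr]
    rw [h1, h2]
    exact star_mul_self_nonneg _
  have hone_sub_nonneg : 0 ≤ (1 - a : A) := by
    have h2 : a ≤ algebraMap ℝ A ‖a‖ := ha_sa.le_algebraMap_norm_self
    have h3 : algebraMap ℝ A ‖a‖ ≤ 1 := by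
      have h4 : 0 ≤ algebraMap ℝ A (1 - ‖a‖) := halg_nonneg _ (by linarith)
      rw [map_sub, map_one] at h4
      exact sub_nonneg.1 h4
    exact sub_nonneg.2 (h2.trans h3)
  have hv_sa : star v = v := by
    have h1 : star v * (1 - a) = 1 := by
      have := congrArg star hvr
      rwa [star_mul, hsub_sa, star_one] at this
    calc star v = star v * ((1 - a) * v) := by rw [hvr, mul_one]
      _ = (star v * (1 - a)) * v := by rw [mul_assoc]
      _ = v := by rw [h1, one_mul]
  have hv_nonneg : 0 ≤ v := by
    have h1 : star v * (1 - a) * v = v := by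
      rw [hv_sa, mul_assoc, hvr, mul_one]
    have := star_left_conjugate_nonneg hone_sub_nonneg v
    rwa [h1] at this
  have hv_comm : ∀ b : A, v * b = b * v := by
    intro b
    have hb : b * (1 - a) = (1 - a) * b := by
      rw [mul_sub, sub_mul, mul_one, one_mul, ha_comm b]
    calc v * b = v * b * ((1 - a) * v) := by rw [hvr, mul_one]
      _ = v * (b * (1 - a)) * v := by noncomm_ring
      _ = v * ((1 - a) * b) * v := by rw [hb]
      _ = (v * (1 - a)) * (b * v) := by noncomm_ring
      _ = b * v := by rw [hvl, one_mul]
  refine ⟨hu, ?_, central_mul_nonneg ha_pos ha_comm hv_nonneg, ?_, ?_⟩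
  · intro x
    have h1 : M.d (T x) (T (T x)) ≤ a * M.d x (T x) + a * M.d (T x) (T (T x)) := by
      have := hT x (T x)
      rwa [mul_add] at this
    have h2 : (1 - a) * M.d (T x) (T (T x)) ≤ a * M.d x (T x) := by
      rw [sub_mul, one_mul, sub_le_iff_le_add]
      exact h1
    have h3 := central_mul_le hv_nonneg hv_comm h2
    calc M.d (T x) (T (T x)) = v * ((1 - a) * M.d (T x) (T (T x))) := by
          rw [← mul_assoc, hvl, one_mul]
      _ ≤ v * (a * M.d x (T x)) := h3
      _ = a * v * M.d x (T x) := by rw [← mul_assoc, hv_comm a]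
  · intro b
    calc a * v * b = a * (b * v) := by rw [mul_assoc, hv_comm b]
      _ = (a * b) * v := by rw [mul_assoc]
      _ = (b * a) * v := by rw [ha_comm b]
      _ = b * (a * v) := by rw [mul_assoc]
  · rcases subsingleton_or_nontrivial A with hsub | hnt
    · have : a * v = 0 := Subsingleton.elim _ _
      rw [this, norm_zero]
      norm_num
    · have hvnorm : ‖v‖ ≤ (1 - ‖a‖)⁻¹ := by
        have h1 : v = ∑' n : ℕ, a ^ n := (geom_series_eq_inverse a ha1).symm
        have h2 := tsum_geometric_le_of_norm_lt_one a ha1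
        rw [norm_one] at h2
        rw [h1]
        linarith
      have hnn : (0 : ℝ) < 1 - ‖a‖ := by linarith
      calc ‖a * v‖ ≤ ‖a‖ * ‖v‖ := norm_mul_le _ _
        _ ≤ ‖a‖ * (1 - ‖a‖)⁻¹ :=
            mul_le_mul_of_nonneg_left hvnorm (norm_nonneg a)
        _ = ‖a‖ / (1 - ‖a‖) := by rw [div_eq_mul_inv]
        _ < 1 := by
            rw [div_lt_one hnn]
            linarith [norm_nonneg a]
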